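/- For every positive integer n, C_0(n) := Σ_{k=1}^{n} (−1)^(k−1) · [2n, n−k] equals (1/2) · [2n, n] + (−1)^n / (4n − 2). -/

import Mathlib

open Finset

/-- Rising factorial `(x)_n = x(x+1)⋯(x+n-1)`. -/
noncomputable def rfact (x : ℝ) : ℕ → ℝ
  | 0 => 1
  | n + 1 => rfact x n * (x + n)

/-- The bracket coefficient `[n, k] = (1/2)_n / ((1/2)_k (1/2)_{n-k})`. -/
noncomputable def brkt (n k : ℕ) : ℝ :=
  rfact (1 / 2) n / (rfact (1 / 2) k * rfact (1 / 2) (n - k))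

lemma rfact_half_pos (m : ℕ) : 0 < rfact (1 / 2) m := by
  induction m with
  | zero => norm_num [rfact]
  | succ k ih =>
      have : (0 : ℝ) < 1 / 2 + k := by positivity
      simpa [rfact] using mul_pos ih this

lemma brkt_key (n j : ℕ) (hj : j + 1 ≤ 2 * n) :
    (2 * (j : ℝ) + 1) * brkt (2 * n) (j + 1) =
      (4 * (n : ℝ) - 2 * j - 1) * brkt (2 * n) j := by
  set m := 2 * n - (j + 1) with hmdef
  have hm : 2 * n - j = m + 1 := by omega
  have hmr : (m : ℝ) = 2 * (n : ℝ) - (j : ℝ) - 1 := by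
    rw [hmdef, Nat.cast_sub hj]; push_cast; ring
  unfold brkt
  rw [hm, ← hmdef]
  have e1 : rfact (1 / 2) (j + 1) = rfact (1 / 2) j * (1 / 2 + j) := rfl
  have e2 : rfact (1 / 2) (m + 1) = rfact (1 / 2) m * (1 / 2 + m) := rfl
  rw [e1, e2]
  have h1 : rfact (1 / 2) j ≠ 0 := (rfact_half_pos j).ne'
  have h2 : rfact (1 / 2) m ≠ 0 := (rfact_half_pos m).ne'
  have h3 : (1 / 2 + (j : ℝ)) ≠ 0 := by positivity
  have h4 : (1 / 2 + (m : ℝ)) ≠ 0 := by positivity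
  field_simp
  rw [hmr]
  ring

theorem C_zero_eval (n : ℕ) (hn : 0 < n) :
    ∑ k ∈ Finset.Icc 1 n, (-1 : ℝ) ^ (k - 1) * brkt (2 * n) (n - k) =
      (1 / 2) * brkt (2 * n) n + (-1 : ℝ) ^ n / (4 * (n : ℝ) - 2) := by
  have hn1 : (1 : ℝ) ≤ n := by exact_mod_cast hn
  have h42 : (4 * (n : ℝ) - 2) ≠ 0 := by nlinarith
  have main : ∀ k, k ≤ n →
      ∑ j ∈ Finset.Icc 1 k, (-1 : ℝ) ^ (j - 1) * brkt (2 * n) (n - j) =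
        (1 / 2) * brkt (2 * n) n +
          (-1 : ℝ) ^ k * ((2 * (k : ℝ) + 1 - 2 * n) / (4 * (n : ℝ) - 2)) *
            brkt (2 * n) (n - k) := by
    intro k
    induction k with
    | zero =>
        intro _
        rw [show Finset.Icc 1 0 = ∅ from rfl, Finset.sum_empty]
        simp only [Nat.sub_zero, Nat.cast_zero, pow_zero]
        have e : ((2 * (0:ℝ) + 1 - 2 * n) / (4 * (n : ℝ) - 2)) = -(1/2) := by
          rw [div_eq_iff h42]; ring
        linear_combination (-brkt (2 * n) n) * e
    | succ k ih =>
        intro hk1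
        have hk : k ≤ n := by omega
        have hsum : ∑ j ∈ Finset.Icc 1 (k + 1), (-1 : ℝ) ^ (j - 1) * brkt (2 * n) (n - j) =
            (∑ j ∈ Finset.Icc 1 k, (-1 : ℝ) ^ (j - 1) * brkt (2 * n) (n - j)) +
              (-1 : ℝ) ^ k * brkt (2 * n) (n - (k + 1)) := by
          rw [Finset.sum_Icc_succ_top (by omega : 1 ≤ k + 1)]
          simp
        rw [hsum, ih hk]
        have hrel := brkt_key n (n - (k + 1)) (by omega)
        have hcast : ((n - (k + 1) : ℕ) : ℝ) = (n : ℝ) - (k : ℝ) - 1 := by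
          rw [Nat.cast_sub hk1]; push_cast; ring
        have hidx : n - (k + 1) + 1 = n - k := by omega
        rw [hidx, hcast] at hrel
        -- hrel : (2*(n-k-1)+1) * brkt (2n) (n-k) = (4n - 2*(n-k-1) - 1) * brkt (2n) (n-(k+1))
        push_cast
        have hinv : (4 * (n:ℝ) - 2) * (4 * (n:ℝ) - 2)⁻¹ = 1 := mul_inv_cancel₀ h42
        linear_combination (-(-1:ℝ)^k / (4 * (n:ℝ) - 2)) * hrel -
          (-1:ℝ)^k * brkt (2 * n) (n - (k + 1)) * hinv
  have hfin := main n le_rfl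
  rw [Nat.sub_self] at hfin
  have hb0 : brkt (2 * n) 0 = 1 := by
    unfold brkt
    rw [show rfact (1/2) 0 = 1 from rfl, one_mul, Nat.sub_zero,
      div_self (rfact_half_pos (2 * n)).ne']
  rw [hb0] at hfin
  rw [hfin]
  ring
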